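/- Let α > −1/2 be real and z > 0. Then the modified Bessel function of the first kind, defined by the series I_α(z) = Σ_{m=0}^{∞} (z/2)^{2m+α}/(m!·Γ(m+α+1)), admits the integral representation I_α(z) = ((z/2)^α/(√π·Γ(α+1/2))) · ∫_{-1}^{1} (1−t²)^{α−1/2} e^{zt} dt. -/

import Mathlib

open MeasureTheory Real

open Set

open scoped ENNReal NNReal


lemma complex_beta_eq (a b : ℝ) (ha : 0 < a) (hb : 0 < b) :
    Complex.betaIntegral a b = ((∫ x in (0:ℝ)..1, x ^ (a-1) * (1-x) ^ (b-1) : ℝ) : ℂ) := by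
  rw [Complex.betaIntegral, ← intervalIntegral.integral_ofReal]
  refine intervalIntegral.integral_congr_ae (MeasureTheory.ae_of_all _ fun x hx => ?_)
  rw [Set.uIoc_of_le (by norm_num : (0:ℝ) ≤ 1)] at hx
  have hx0 : (0:ℝ) ≤ x := hx.1.le
  have hx1 : (0:ℝ) ≤ 1 - x := by linarith [hx.2]
  rw [show ((a:ℂ) - 1) = ((a - 1 : ℝ) : ℂ) by push_cast; ring,
    show ((b:ℂ) - 1) = ((b - 1 : ℝ) : ℂ) by push_cast; ring,
    ← Complex.ofReal_cpow hx0,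
    show ((1:ℂ) - (x:ℂ)) = (((1 - x : ℝ)) : ℂ) by push_cast; ring,
    ← Complex.ofReal_cpow hx1, ← Complex.ofReal_mul]

lemma real_beta (a b : ℝ) (ha : 0 < a) (hb : 0 < b) :
    ∫ x in (0:ℝ)..1, x ^ (a-1) * (1-x) ^ (b-1)
      = Real.Gamma a * Real.Gamma b / Real.Gamma (a+b) := by
  have h := Complex.Gamma_mul_Gamma_eq_betaIntegral (s := a) (t := b)
    (by simpa using ha) (by simpa using hb)
  rw [complex_beta_eq a b ha hb, ← Complex.ofReal_add, Complex.Gamma_ofReal,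
    Complex.Gamma_ofReal, Complex.Gamma_ofReal, ← Complex.ofReal_mul, ← Complex.ofReal_mul]
    at h
  have h' := Complex.ofReal_inj.mp h
  have hG : Real.Gamma (a+b) ≠ 0 := (Real.Gamma_pos_of_pos (by linarith)).ne'
  field_simp [hG] at h' ⊢
  linarith [h']

lemma real_beta_integrable (a b : ℝ) (ha : 0 < a) (hb : 0 < b) :
    IntegrableOn (fun x : ℝ => x ^ (a-1) * (1-x) ^ (b-1)) (Ioc 0 1) := by
  have h := Complex.betaIntegral_convergent (u := a) (v := b)
    (by simpa using ha) (by simpa using hb)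
  rw [intervalIntegrable_iff_integrableOn_Ioc_of_le (by norm_num : (0:ℝ) ≤ 1)] at h
  have := h.re
  refine this.congr ?_
  filter_upwards [MeasureTheory.ae_restrict_mem measurableSet_Ioc] with x hx
  have hx0 : (0:ℝ) ≤ x := hx.1.le
  have hx1 : (0:ℝ) ≤ 1 - x := by linarith [hx.2]
  have : ((a:ℂ) - 1) = ((a - 1 : ℝ) : ℂ) := by push_cast; ring
  have h2 : ((b:ℂ) - 1) = ((b - 1 : ℝ) : ℂ) := by push_cast; ring
  rw [this, h2, ← Complex.ofReal_cpow hx0]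
  rw [show ((1:ℂ) - (x:ℂ)) = (((1 - x : ℝ)) : ℂ) by push_cast; ring, ← Complex.ofReal_cpow hx1]
  simp [← Complex.ofReal_mul]

section
variable {α : ℝ}

lemma sq_image : (fun t : ℝ => t ^ 2) '' Ioo 0 1 = Ioo (0:ℝ) 1 := by
  ext x
  constructor
  · rintro ⟨t, ht, rfl⟩
    exact ⟨pow_pos ht.1 2, pow_lt_one₀ ht.1.le ht.2 two_ne_zero⟩
  · intro hx
    exact ⟨Real.sqrt x, ⟨Real.sqrt_pos.mpr hx.1, by
      rw [show (1:ℝ) = Real.sqrt 1 by simp]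
      exact Real.sqrt_lt_sqrt hx.1.le hx.2⟩, Real.sq_sqrt hx.1.le⟩

lemma neg_image : (fun t : ℝ => -t) '' Ioo 0 1 = Ioo (-1:ℝ) 0 := by
  ext x
  constructor
  · rintro ⟨t, ht, rfl⟩
    obtain ⟨h1, h2⟩ := ht
    exact ⟨by dsimp; linarith, by dsimp; linarith⟩
  · intro hx
    exact ⟨-x, ⟨by linarith [hx.2], by linarith [hx.1]⟩, by dsimp; ring⟩

lemma affine_image : (fun x : ℝ => 1 - 2 * x) '' Ioo 0 1 = Ioo (-1:ℝ) 1 := by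
  ext x
  constructor
  · rintro ⟨t, ht, rfl⟩
    obtain ⟨h1, h2⟩ := ht
    exact ⟨by dsimp; linarith, by dsimp; linarith⟩
  · intro hx
    exact ⟨(1 - x) / 2, ⟨by linarith [hx.2], by linarith [hx.1]⟩, by dsimp; ring⟩

lemma g0_integrable (hα : -1/2 < α) :
    IntegrableOn (fun t : ℝ => (1 - t ^ 2) ^ (α - 1/2)) (Ioo (-1:ℝ) 1) := by
  have hb : (0:ℝ) < α + 1/2 := by linarith
  have hbeta := real_beta_integrable (α + 1/2) (α + 1/2) hb hb
  have hbeta' : IntegrableOn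
      (fun x : ℝ => (2:ℝ) • ((1 - (1 - 2*x) ^ 2) ^ (α - 1/2))) (Ioo 0 1) := by
    have : IntegrableOn (fun x : ℝ => 2 * (4:ℝ) ^ (α - 1/2) *
        (x ^ (α + 1/2 - 1) * (1-x) ^ (α + 1/2 - 1))) (Ioo 0 1) :=
      ((hbeta.mono_set Ioo_subset_Ioc_self).const_mul _)
    refine this.congr_fun (fun x hx => ?_) measurableSet_Ioo
    have hx0 : (0:ℝ) ≤ x := hx.1.le
    have hx1 : (0:ℝ) ≤ 1 - x := by linarith [hx.2]
    have h4 : (1 : ℝ) - (1 - 2*x)^2 = 4 * (x * (1 - x)) := by ring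
    rw [smul_eq_mul, h4, show (4 : ℝ) * (x * (1-x)) = 4 * x * (1-x) by ring,
      Real.mul_rpow (by positivity) hx1, Real.mul_rpow (by norm_num) hx0]
    ring_nf
  have hder : ∀ x ∈ Ioo (0:ℝ) 1, HasDerivWithinAt (fun x : ℝ => 1 - 2 * x) (-2) (Ioo 0 1) x := by
    intro x _
    have : HasDerivAt (fun x : ℝ => 1 - 2 * x) (-2) x := by
      simpa using ((hasDerivAt_id x).const_mul (2:ℝ)).const_sub 1
    exact this.hasDerivWithinAt
  rw [show Ioo (-1:ℝ) 1 = (fun x : ℝ => 1 - 2 * x) '' Ioo 0 1 from affine_image.symm,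
    integrableOn_image_iff_integrableOn_abs_deriv_smul measurableSet_Ioo hder
      (fun x _ y _ h => by linarith) _]
  simpa using hbeta'
end
section
variable {α : ℝ}

lemma h_measurable (α : ℝ) (n : ℕ) :
    Measurable (fun t : ℝ => (1 - t ^ 2) ^ (α - 1/2) * t ^ n) := by
  fun_prop

lemma integrable_aux (hα : -1/2 < α) (n : ℕ) :
    IntegrableOn (fun t : ℝ => (1 - t ^ 2) ^ (α - 1/2) * t ^ n) (Ioo (-1:ℝ) 1) := by
  refine Integrable.mono (g0_integrable hα) ((h_measurable α n).aestronglyMeasurable.restrict) ?_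
  filter_upwards [MeasureTheory.ae_restrict_mem measurableSet_Ioo] with t ht
  have h1 : (0:ℝ) ≤ 1 - t ^ 2 := by nlinarith [ht.1, ht.2]
  have h2 : |t| ≤ 1 := abs_le.mpr ⟨ht.1.le, ht.2.le⟩
  rw [Real.norm_eq_abs, Real.norm_eq_abs, abs_mul, abs_of_nonneg (Real.rpow_nonneg h1 _),
    abs_pow]
  calc (1 - t^2) ^ (α - 1/2) * |t| ^ n ≤ (1 - t^2) ^ (α - 1/2) * 1 := by
        refine mul_le_mul_of_nonneg_left ?_ (Real.rpow_nonneg h1 _)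
        exact pow_le_one₀ (abs_nonneg t) h2
    _ = (1 - t^2) ^ (α - 1/2) := mul_one _

lemma reflect_integral (n : ℕ) :
    ∫ t in Ioo (-1:ℝ) 0, (1 - t ^ 2) ^ (α - 1/2) * t ^ n
      = ∫ t in Ioo (0:ℝ) 1, (1 - t ^ 2) ^ (α - 1/2) * (-t) ^ n := by
  have hder : ∀ x ∈ Ioo (0:ℝ) 1, HasDerivWithinAt (fun x : ℝ => -x) (-1) (Ioo 0 1) x :=
    fun x _ => (hasDerivAt_neg x).hasDerivWithinAt
  rw [show Ioo (-1:ℝ) 0 = (fun x : ℝ => -x) '' Ioo 0 1 from neg_image.symm,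
    integral_image_eq_integral_abs_deriv_smul measurableSet_Ioo hder
      (fun x _ y _ h => by simpa using h)]
  refine MeasureTheory.setIntegral_congr_fun measurableSet_Ioo (fun x _ => ?_)
  rw [neg_sq]
  norm_num

lemma moment_split (hα : -1/2 < α) (n : ℕ) :
    ∫ t in Ioc (-1:ℝ) 1, (1 - t ^ 2) ^ (α - 1/2) * t ^ n
      = (1 + (-1:ℝ) ^ n) * ∫ t in Ioo (0:ℝ) 1, (1 - t ^ 2) ^ (α - 1/2) * t ^ n := by
  have hi := integrable_aux hα n
  have hio1 : IntegrableOn (fun t : ℝ => (1 - t ^ 2) ^ (α - 1/2) * t ^ n) (Ioo (-1:ℝ) 0) :=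
    hi.mono_set (Ioo_subset_Ioo_right (by norm_num))
  have hio2 : IntegrableOn (fun t : ℝ => (1 - t ^ 2) ^ (α - 1/2) * t ^ n) (Ioo (0:ℝ) 1) :=
    hi.mono_set (Ioo_subset_Ioo_left (by norm_num))
  have hi1 : IntegrableOn (fun t : ℝ => (1 - t ^ 2) ^ (α - 1/2) * t ^ n) (Ioc (-1:ℝ) 0) :=
    hio1.congr_set_ae Ioo_ae_eq_Ioc.symm
  have hi2 : IntegrableOn (fun t : ℝ => (1 - t ^ 2) ^ (α - 1/2) * t ^ n) (Ioc (0:ℝ) 1) :=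
    hio2.congr_set_ae Ioo_ae_eq_Ioc.symm
  have hneg : IntegrableOn (fun t : ℝ => (1 - t ^ 2) ^ (α - 1/2) * (-t) ^ n) (Ioo (0:ℝ) 1) := by
    refine (hio2.const_mul ((-1:ℝ) ^ n)).congr ?_
    filter_upwards with t
    rw [neg_pow]
    ring
  rw [show Ioc (-1:ℝ) 1 = Ioc (-1:ℝ) 0 ∪ Ioc 0 1 from
      (Set.Ioc_union_Ioc_eq_Ioc (by norm_num) (by norm_num)).symm,
    MeasureTheory.setIntegral_union (Set.Ioc_disjoint_Ioc_of_le le_rfl) measurableSet_Ioc hi1 hi2,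
    MeasureTheory.integral_Ioc_eq_integral_Ioo, MeasureTheory.integral_Ioc_eq_integral_Ioo,
    reflect_integral, ← MeasureTheory.integral_add hneg hio2, ← MeasureTheory.integral_const_mul]
  refine MeasureTheory.setIntegral_congr_fun measurableSet_Ioo (fun t _ => ?_)
  rw [neg_pow]
  ring
end
section
variable {α : ℝ}

lemma moment_even (hα : -1/2 < α) (m : ℕ) :
    ∫ t in Ioc (-1:ℝ) 1, (1 - t ^ 2) ^ (α - 1/2) * t ^ (2*m)
      = Real.Gamma ((m:ℝ) + 1/2) * Real.Gamma (α + 1/2) / Real.Gamma ((m:ℝ) + α + 1) := by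
  rw [moment_split hα, show ((-1:ℝ)) ^ (2*m) = 1 by rw [pow_mul]; norm_num]
  have hbeta : ∫ x in Ioo (0:ℝ) 1, x ^ ((m:ℝ) - 1/2) * (1-x) ^ (α - 1/2)
      = Real.Gamma ((m:ℝ) + 1/2) * Real.Gamma (α + 1/2) / Real.Gamma ((m:ℝ) + α + 1) := by
    have h := real_beta ((m:ℝ) + 1/2) (α + 1/2) (by positivity) (by linarith)
    rw [intervalIntegral.integral_of_le (by norm_num : (0:ℝ) ≤ 1),
      MeasureTheory.integral_Ioc_eq_integral_Ioo] at h
    rw [show ((m:ℝ) + 1/2 + (α + 1/2)) = (m:ℝ) + α + 1 by ring] at h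
    rw [← h]
    refine MeasureTheory.setIntegral_congr_fun measurableSet_Ioo (fun x _ => ?_)
    rw [show ((m:ℝ) + 1/2 - 1) = (m:ℝ) - 1/2 by ring,
      show (α + 1/2 - 1) = α - 1/2 by ring]
  have hder : ∀ x ∈ Ioo (0:ℝ) 1,
      HasDerivWithinAt (fun x : ℝ => x ^ 2) (2 * x ^ 1) (Ioo 0 1) x :=
    fun x _ => (hasDerivAt_pow 2 x).hasDerivWithinAt
  have hsubst : ∫ x in (fun t : ℝ => t ^ 2) '' Ioo 0 1, x ^ ((m:ℝ) - 1/2) * (1-x) ^ (α - 1/2)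
      = ∫ t in Ioo (0:ℝ) 1,
          |2 * t ^ 1| • ((t^2) ^ ((m:ℝ) - 1/2) * (1-t^2) ^ (α - 1/2)) :=
    integral_image_eq_integral_abs_deriv_smul measurableSet_Ioo hder
      (fun x hx y hy h => by nlinarith [hx.1, hy.1, h]) _
  have key : ∫ x in Ioo (0:ℝ) 1, x ^ ((m:ℝ) - 1/2) * (1-x) ^ (α - 1/2)
      = 2 * ∫ t in Ioo (0:ℝ) 1, (1 - t ^ 2) ^ (α - 1/2) * t ^ (2*m) := by
    conv_lhs => rw [show Ioo (0:ℝ) 1 = (fun t : ℝ => t ^ 2) '' Ioo 0 1 from sq_image.symm]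
    rw [hsubst, ← MeasureTheory.integral_const_mul]
    refine MeasureTheory.setIntegral_congr_fun measurableSet_Ioo (fun t ht => ?_)
    have ht0 : (0:ℝ) < t := ht.1
    rw [smul_eq_mul, pow_one, abs_of_pos (by linarith : (0:ℝ) < 2 * t)]
    have hsq : (t ^ 2 : ℝ) ^ ((m:ℝ) - 1/2) = t ^ (2 * ((m:ℝ) - 1/2)) := by
      rw [← Real.rpow_natCast t 2, ← Real.rpow_mul ht0.le]
      norm_num
    rw [hsq]
    have ht2 : (2:ℝ) * t * (t ^ (2 * ((m:ℝ) - 1/2)) * (1 - t^2) ^ (α - 1/2))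
        = 2 * ((1 - t^2) ^ (α - 1/2) * (t ^ (1:ℝ) * t ^ (2 * ((m:ℝ) - 1/2)))) := by
      rw [Real.rpow_one]; ring
    rw [ht2, ← Real.rpow_add ht0, show (1 + 2 * ((m:ℝ) - 1/2)) = ((2*m : ℕ) : ℝ) by push_cast; ring,
      Real.rpow_natCast]
  rw [← hbeta, key]
  ring

lemma term_eq {z : ℝ} (hα : -1/2 < α) (hz : 0 < z) (m : ℕ) :
    (z / 2) ^ ((2 * m : ℝ) + α) / ((Nat.factorial m : ℝ) * Real.Gamma ((m : ℝ) + α + 1))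
      = (z / 2) ^ α / (Real.sqrt Real.pi * Real.Gamma (α + 1/2)) *
        (z ^ (2*m) / ((2*m).factorial : ℝ) *
          (Real.Gamma ((m:ℝ) + 1/2) * Real.Gamma (α + 1/2) / Real.Gamma ((m:ℝ) + α + 1))) := by
  have hdup := Real.Gamma_mul_Gamma_add_half ((m:ℝ) + 1/2)
  rw [show ((m:ℝ) + 1/2 + 1/2) = ((m:ℝ) + 1) by ring, Real.Gamma_nat_eq_factorial,
    show (2 * ((m:ℝ) + 1/2)) = (((2*m : ℕ) : ℝ) + 1) by push_cast; ring,
    Real.Gamma_nat_eq_factorial,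
    show ((1:ℝ) - (((2*m : ℕ) : ℝ) + 1)) = -((2*m : ℕ) : ℝ) by push_cast; ring,
    Real.rpow_neg (by norm_num : (0:ℝ) ≤ 2), Real.rpow_natCast] at hdup
  -- hdup : Γ(m+1/2) * m! = (2m)! * (2^(2m))⁻¹ * √π
  have hfac1 : ((Nat.factorial m : ℝ)) ≠ 0 := Nat.cast_ne_zero.mpr (Nat.factorial_ne_zero m)
  have hfac2 : (((2*m).factorial : ℝ)) ≠ 0 := Nat.cast_ne_zero.mpr (Nat.factorial_ne_zero _)
  have hsπ : Real.sqrt Real.pi ≠ 0 := by positivity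
  have hGα : Real.Gamma (α + 1/2) ≠ 0 := (Real.Gamma_pos_of_pos (by linarith)).ne'
  have hG : Real.Gamma ((m:ℝ) + α + 1) ≠ 0 := by
    have hm := (Nat.cast_nonneg m : (0:ℝ) ≤ m)
    exact (Real.Gamma_pos_of_pos (by linarith)).ne'
  have hGm : Real.Gamma ((m:ℝ) + 1/2)
      = ((2*m).factorial : ℝ) * ((2:ℝ) ^ (2*m))⁻¹ * Real.sqrt Real.pi / (Nat.factorial m : ℝ) := by
    field_simp at hdup ⊢
    linarith [hdup]
  have hpow : (z / 2) ^ ((2 * m : ℝ) + α) = (z/2) ^ (2*m) * (z/2) ^ α := by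
    rw [Real.rpow_add (by linarith), show ((2:ℝ) * m) = ((2*m : ℕ) : ℝ) by push_cast; ring,
      Real.rpow_natCast]
  rw [hpow, hGm, div_pow]
  have h2 : ((2:ℝ)) ^ (2*m) ≠ 0 := by positivity
  have gen : ∀ (A B S Gα G F1 F2 P : ℝ), S ≠ 0 → Gα ≠ 0 → G ≠ 0 → F1 ≠ 0 → F2 ≠ 0 → P ≠ 0 →
      B / P * A / (F1 * G) = A / (S * Gα) * (B / F2 * (F2 * P⁻¹ * S / F1 * Gα / G)) := by
    intros A B S Gα G F1 F2 P hS hGα hG hF1 hF2 hP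
    field_simp
  exact gen _ _ _ _ _ _ _ _ hsπ hGα hG hfac1 hfac2 h2
end

/-- The modified Bessel function of the first kind, defined by its power series
`I_α(z) = Σ_{m=0}^∞ (z/2)^{2m+α}/(m!·Γ(m+α+1))`. -/
noncomputable def besselI (α z : ℝ) : ℝ :=
  ∑' m : ℕ, (z / 2) ^ ((2 * m : ℝ) + α) / ((Nat.factorial m : ℝ) * Real.Gamma ((m : ℝ) + α + 1))

/-- Integral representation of the modified Bessel function of the
first kind for `α > −1/2` and `z > 0`. -/

theorem besselI_integral_repr (α z : ℝ) (hα : -1/2 < α) (hz : 0 < z) :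
    besselI α z =
      (z / 2) ^ α / (Real.sqrt Real.pi * Real.Gamma (α + 1/2)) *
        ∫ t in (-1 : ℝ)..1, (1 - t ^ 2) ^ (α - 1/2) * Real.exp (z * t) := by
  rw [intervalIntegral.integral_of_le (by norm_num : (-1:ℝ) ≤ 1)]
  have hexp : ∀ t : ℝ, (1 - t^2) ^ (α - 1/2) * Real.exp (z*t)
      = ∑' n : ℕ, (1 - t^2) ^ (α - 1/2) * ((z*t)^n / (n.factorial : ℝ)) := by
    intro t
    rw [Real.exp_eq_exp_ℝ, NormedSpace.exp_eq_tsum_div, tsum_mul_left]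
  have hg0 : IntegrableOn (fun t : ℝ => (1 - t^2) ^ (α - 1/2)) (Ioc (-1:ℝ) 1) :=
    (g0_integrable hα).congr_set_ae Ioo_ae_eq_Ioc.symm
  set C : ℝ≥0∞ := ∫⁻ t in Ioc (-1:ℝ) 1, ‖(1 - t^2) ^ (α - 1/2)‖₊ with hCdef
  have hC : C < ⊤ := hg0.2
  have hsum : Summable fun n : ℕ => ‖z^n/(n.factorial : ℝ)‖₊ := by
    rw [← NNReal.summable_coe]
    simpa [coe_nnnorm, Real.norm_eq_abs, abs_div, abs_pow, Nat.abs_cast]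
      using Real.summable_pow_div_factorial |z|
  have hswap : ∫ t in Ioc (-1:ℝ) 1, (1 - t^2) ^ (α - 1/2) * Real.exp (z*t)
      = ∑' n : ℕ, ∫ t in Ioc (-1:ℝ) 1,
          (1 - t^2) ^ (α - 1/2) * ((z*t)^n / (n.factorial : ℝ)) := by
    simp_rw [hexp]
    refine MeasureTheory.integral_tsum (fun n => (Measurable.aestronglyMeasurable
      (by fun_prop)).restrict) ?_
    have hbound : ∑' n : ℕ, ∫⁻ t in Ioc (-1:ℝ) 1,
        ‖(1 - t^2) ^ (α - 1/2) * ((z*t)^n / (n.factorial : ℝ))‖₊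
        ≤ ∑' n : ℕ, (‖z^n/(n.factorial : ℝ)‖₊ : ℝ≥0∞) * C := by
      refine ENNReal.tsum_le_tsum fun n => ?_
      rw [hCdef, ← MeasureTheory.lintegral_const_mul' _ _ ENNReal.coe_ne_top]
      refine MeasureTheory.lintegral_mono_ae ?_
      filter_upwards [MeasureTheory.ae_restrict_mem measurableSet_Ioc] with t ht
      rw [← ENNReal.coe_mul, ENNReal.coe_le_coe, ← nnnorm_mul, ← NNReal.coe_le_coe,
        coe_nnnorm, coe_nnnorm]
      have h1 : (0:ℝ) ≤ 1 - t ^ 2 := by nlinarith [ht.1, ht.2]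
      have h2 : |t| ≤ 1 := abs_le.mpr ⟨ht.1.le, ht.2⟩
      rw [Real.norm_eq_abs, Real.norm_eq_abs, abs_mul, abs_mul, abs_div, abs_div, abs_pow,
        abs_pow, abs_mul, Nat.abs_cast, mul_pow]
      have h3 : |z|^n * |t|^n ≤ |z|^n := by
        calc |z|^n * |t|^n ≤ |z|^n * 1 :=
              mul_le_mul_of_nonneg_left (pow_le_one₀ (abs_nonneg t) h2) (by positivity)
          _ = |z|^n := mul_one _
      have h4 : (0:ℝ) < (n.factorial : ℝ) := by exact_mod_cast n.factorial_pos
      calc |(1 - t^2) ^ (α - 1/2)| * (|z|^n * |t|^n / (n.factorial : ℝ))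
          ≤ |(1 - t^2) ^ (α - 1/2)| * (|z|^n / (n.factorial : ℝ)) := by
            exact mul_le_mul_of_nonneg_left ((div_le_div_iff_of_pos_right h4).mpr h3) (abs_nonneg _)
        _ = |z|^n / (n.factorial : ℝ) * |(1 - t^2) ^ (α - 1/2)| := by ring
    refine ne_top_of_le_ne_top ?_ hbound
    rw [ENNReal.tsum_mul_right]
    exact (ENNReal.mul_lt_top (ENNReal.tsum_coe_ne_top_iff_summable.mpr hsum).lt_top hC).ne
  have heval : ∀ n : ℕ, ∫ t in Ioc (-1:ℝ) 1,
        (1 - t^2) ^ (α - 1/2) * ((z*t)^n / (n.factorial : ℝ))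
      = z^n/(n.factorial : ℝ) * ∫ t in Ioc (-1:ℝ) 1, (1 - t^2) ^ (α - 1/2) * t^n := by
    intro n
    rw [← MeasureTheory.integral_const_mul]
    refine MeasureTheory.setIntegral_congr_fun measurableSet_Ioc (fun t _ => ?_)
    rw [mul_pow]
    ring
  set a : ℕ → ℝ := fun n =>
    z^n/(n.factorial : ℝ) * ∫ t in Ioc (-1:ℝ) 1, (1 - t^2) ^ (α - 1/2) * t^n with ha
  have hinj : Function.Injective (fun m : ℕ => 2*m) := fun a b h => by
    have h' : 2*a = 2*b := h
    omega
  have hsupp : Function.support a ⊆ Set.range (fun m : ℕ => 2*m) := by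
    intro n hn
    by_contra hmem
    have hodd : Odd n := by
      rcases Nat.even_or_odd n with he | ho
      · obtain ⟨k, hk⟩ := he
        exact absurd ⟨k, show 2*k = n by omega⟩ hmem
      · exact ho
    refine hn ?_
    rw [ha]
    dsimp only
    rw [moment_split hα n, hodd.neg_one_pow]
    norm_num
  have hre : ∑' m : ℕ, a (2*m) = ∑' n : ℕ, a n := hinj.tsum_eq hsupp
  rw [hswap]
  have : ∑' n : ℕ, ∫ t in Ioc (-1:ℝ) 1,
      (1 - t^2) ^ (α - 1/2) * ((z*t)^n / (n.factorial : ℝ)) = ∑' n : ℕ, a n :=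
    tsum_congr fun n => heval n
  rw [this, ← hre, ← tsum_mul_left]
  refine tsum_congr fun m => ?_
  rw [ha]
  dsimp only
  rw [moment_even hα m]
  exact term_eq hα hz m
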